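/- Let A ∈ ℂ^{m×d} have full column rank, let x ∈ ℂ^d be nonzero, and define the real matrix D_A(x) = [[Re A, Im A, Re(dg(Ax))], [-Im A, Re A, -Im(dg(Ax))]] of size 2m × (2d+m). Then x ∈ W_A if and only if rank(D_A(x)) = 2d + |N(Ax)| - 1. -/

import Mathlib

set_option linter.unnecessarySeqFocus false

attribute [local instance] Classical.propDecidable

noncomputable def csign (z : ℂ) : ℂ := if z = 0 then 0 else z / ‖z‖

def Wset {m d : ℕ} (B : Matrix (Fin m) (Fin d) ℂ) : Set (Fin d → ℂ) :=
  {x | ∀ y : Fin d → ℂ,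
    (∀ j, csign (B.mulVec y j) = csign (B.mulVec x j)) →
      ∃ t : ℝ, 0 < t ∧ x = fun k => (t : ℂ) * y k}

/-- The real discriminant matrix
`D_A(x) = [[Re A, Im A, Re(dg(Ax))], [-Im A, Re A, -Im(dg(Ax))]]` of size `2m × (2d+m)`. -/
noncomputable def discD {m d : ℕ} (A : Matrix (Fin m) (Fin d) ℂ) (x : Fin d → ℂ) :
    Matrix (Fin m ⊕ Fin m) ((Fin d ⊕ Fin d) ⊕ Fin m) ℝ :=
  Matrix.fromBlocks
    (Matrix.fromCols (A.map Complex.re) (A.map Complex.im))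
    (Matrix.diagonal fun j => (A.mulVec x j).re)
    (Matrix.fromCols (-(A.map Complex.im)) (A.map Complex.re))
    (-(Matrix.diagonal fun j => (A.mulVec x j).im))

open Module Submodule

lemma csign_zero : csign 0 = 0 := if_pos rfl

lemma csign_eq_zero_iff {z : ℂ} : csign z = 0 ↔ z = 0 := by
  unfold csign
  by_cases hz : z = 0 <;> simp [hz]

lemma csign_pos_mul {t : ℝ} (ht : 0 < t) (z : ℂ) : csign ((t : ℂ) * z) = csign z := by
  unfold csign
  by_cases hz : z = 0
  · simp [hz]
  · have h1 : (t : ℂ) * z ≠ 0 := mul_ne_zero (by exact_mod_cast ht.ne') hz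
    rw [if_neg h1, if_neg hz, norm_mul, Complex.norm_real, Real.norm_eq_abs, abs_of_pos ht]
    have ht' : (t : ℂ) ≠ 0 := by exact_mod_cast ht.ne'
    have hz' : (‖z‖ : ℂ) ≠ 0 := by simp [hz]
    push_cast
    field_simp

lemma csign_eq_imp {z w : ℂ} (hw : w ≠ 0) (h : csign z = csign w) :
    ∃ s : ℝ, 0 < s ∧ z = (s : ℂ) * w := by
  have hz : z ≠ 0 := by
    intro h0
    rw [h0, csign_zero] at h
    exact hw (csign_eq_zero_iff.mp h.symm)
  have habsz : (0:ℝ) < ‖z‖ := norm_pos_iff.mpr hz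
  have habsw : (0:ℝ) < ‖w‖ := norm_pos_iff.mpr hw
  refine ⟨‖z‖ / ‖w‖, by positivity, ?_⟩
  unfold csign at h
  rw [if_neg hz, if_neg hw] at h
  have h2 : z * (‖w‖ : ℂ) = w * (‖z‖ : ℂ) := by
    have hz' : (‖z‖ : ℂ) ≠ 0 := by exact_mod_cast habsz.ne'
    have hw' : (‖w‖ : ℂ) ≠ 0 := by exact_mod_cast habsw.ne'
    field_simp at h
    linear_combination h
  have hw' : (‖w‖ : ℂ) ≠ 0 := by exact_mod_cast habsw.ne'
  push_cast
  rw [div_mul_eq_mul_div, eq_div_iff hw']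
  linear_combination h2

lemma mem_V_iff {m : ℕ} (w : Fin m → ℂ) (v : Fin m → ℂ) :
    v ∈ Submodule.span ℝ (Set.range fun j : Fin m => Pi.single j (w j)) ↔
      ∃ c : Fin m → ℝ, v = fun j => (c j : ℂ) * w j := by
  have sum_single : ∀ c : Fin m → ℝ,
      ∑ j, c j • (Pi.single j (w j) : Fin m → ℂ) = fun j' => (c j' : ℂ) * w j' := by
    intro c
    funext j'
    simp [Finset.sum_apply, Pi.single_apply, smul_ite, Complex.real_smul]
  rw [mem_span_range_iff_exists_fun]
  constructor
  · rintro ⟨c, rfl⟩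
    exact ⟨c, sum_single c⟩
  · rintro ⟨c, rfl⟩
    exact ⟨c, sum_single c⟩

lemma injA {m d : ℕ} (A : Matrix (Fin m) (Fin d) ℂ) (hA : A.rank = d) :
    Function.Injective A.mulVecLin := by
  rw [← LinearMap.ker_eq_bot]
  have h := A.mulVecLin.finrank_range_add_finrank_ker
  rw [Matrix.rank] at hA
  rw [hA] at h
  have hd : finrank ℂ (Fin d → ℂ) = d := by simp
  rw [hd] at h
  have : finrank ℂ (LinearMap.ker A.mulVecLin) = 0 := by omega
  exact Submodule.finrank_eq_zero.mp this

lemma wset_iff {m d : ℕ} (A : Matrix (Fin m) (Fin d) ℂ) (hA : A.rank = d)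
    (x : Fin d → ℂ) (hx : x ≠ 0) :
    x ∈ Wset A ↔
      ((LinearMap.range A.mulVecLin).restrictScalars ℝ
          ⊓ Submodule.span ℝ (Set.range fun j : Fin m => Pi.single j (A.mulVec x j)))
        ≤ Submodule.span ℝ {A.mulVec x} := by
  constructor
  · intro hW v hv
    obtain ⟨hvU, hvV⟩ := Submodule.mem_inf.mp hv
    obtain ⟨z, hz⟩ : ∃ z, A.mulVec z = v := hvU
    obtain ⟨c, hc⟩ := (mem_V_iff _ _).mp hvV
    set S := ∑ j, |c j| with hS
    have hS0 : 0 ≤ S := Finset.sum_nonneg fun j _ => abs_nonneg _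
    set ε : ℝ := 1 / (1 + S) with hε
    have hεpos : 0 < ε := by positivity
    have hkey : ε * (1 + S) = 1 := by
      rw [hε]; field_simp
    have hpos : ∀ j, 0 < 1 + ε * c j := by
      intro j
      have h1 : |c j| ≤ S := Finset.single_le_sum (fun j _ => abs_nonneg (c j)) (Finset.mem_univ j)
      nlinarith [neg_abs_le (c j), hεpos]
    have hsign : ∀ j, csign (A.mulVec (x + (ε:ℂ) • z) j) = csign (A.mulVec x j) := by
      intro j
      have hexp : A.mulVec (x + (ε:ℂ) • z) j = ((1 + ε * c j : ℝ) : ℂ) * A.mulVec x j := by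
        rw [Matrix.mulVec_add, Matrix.mulVec_smul, hz]
        have hcj := congrFun hc j
        simp only [Pi.add_apply, Pi.smul_apply, smul_eq_mul, hcj]
        push_cast; ring
      rw [hexp]
      exact csign_pos_mul (hpos j) _
    obtain ⟨t, ht, hxy⟩ := hW _ hsign
    have ht' : (t:ℂ) ≠ 0 := by exact_mod_cast ht.ne'
    have hε' : (ε:ℂ) ≠ 0 := by exact_mod_cast hεpos.ne'
    have hzx : z = (((1 - t) / (t * ε) : ℝ) : ℂ) • x := by
      funext k
      have hk := congrFun hxy k
      simp only [Pi.add_apply, Pi.smul_apply, smul_eq_mul] at hk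
      simp only [Pi.smul_apply, smul_eq_mul]
      push_cast
      field_simp
      linear_combination (-1 : ℂ) * hk
    rw [Submodule.mem_span_singleton]
    refine ⟨(1 - t) / (t * ε), ?_⟩
    rw [← hz, hzx, Matrix.mulVec_smul]
    funext j
    simp [Complex.real_smul]
  · intro hP y hy
    have hAx0 : A.mulVec x ≠ 0 := by
      intro h0
      apply hx
      apply injA A hA
      show A.mulVec x = A.mulVec 0
      rw [h0, Matrix.mulVec_zero]
    have hAyU : A.mulVec y ∈ (LinearMap.range A.mulVecLin).restrictScalars ℝ := ⟨y, rfl⟩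
    have hAyV : A.mulVec y
        ∈ Submodule.span ℝ (Set.range fun j : Fin m => Pi.single j (A.mulVec x j)) := by
      rw [mem_V_iff]
      refine ⟨fun j => ‖A.mulVec y j‖ / ‖A.mulVec x j‖, ?_⟩
      funext j
      by_cases h : A.mulVec x j = 0
      · have h0 : A.mulVec y j = 0 := by
          have := hy j
          rw [h, csign_zero] at this
          exact csign_eq_zero_iff.mp this
        simp [h, h0]
      · obtain ⟨s, hs, hseq⟩ := csign_eq_imp h (hy j)
        simp only [hseq, norm_mul, Complex.norm_real, Real.norm_eq_abs, abs_of_pos hs]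
        have hax : ‖A.mulVec x j‖ ≠ 0 := by simp [h]
        rw [mul_div_assoc, div_self hax, mul_one]
    have hmem := hP (Submodule.mem_inf.mpr ⟨hAyU, hAyV⟩)
    rw [Submodule.mem_span_singleton] at hmem
    obtain ⟨r, hr⟩ := hmem
    obtain ⟨j0, hj0⟩ : ∃ j0, A.mulVec x j0 ≠ 0 := by
      by_contra hcon
      push_neg at hcon
      exact hAx0 (funext hcon)
    obtain ⟨s0, hs0, hseq⟩ := csign_eq_imp hj0 (hy j0)
    have hr0 : r = s0 := by
      have h1 := congrFun hr j0
      simp only [Pi.smul_apply, Complex.real_smul] at h1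
      rw [hseq] at h1
      have := mul_right_cancel₀ hj0 h1
      exact_mod_cast this
    have hrpos : 0 < r := hr0 ▸ hs0
    have hyx : y = (r:ℂ) • x := by
      apply injA A hA
      show A.mulVec y = A.mulVec ((r:ℂ) • x)
      rw [Matrix.mulVec_smul, ← hr]
      funext j
      simp [Complex.real_smul]
    refine ⟨r⁻¹, inv_pos.mpr hrpos, ?_⟩
    funext k
    have := congrFun hyx k
    simp only [Pi.smul_apply, smul_eq_mul] at this
    rw [this]
    have hr' : (r:ℂ) ≠ 0 := by exact_mod_cast hrpos.ne'
    push_cast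
    field_simp

noncomputable def phi (m : ℕ) : (Fin m ⊕ Fin m → ℝ) ≃ₗ[ℝ] (Fin m → ℂ) where
  toFun u := fun j => (u (Sum.inl j) : ℂ) - (u (Sum.inr j) : ℂ) * Complex.I
  invFun v := Sum.elim (fun j => (v j).re) (fun j => -(v j).im)
  map_add' u v := by funext j; simp only [Pi.add_apply]; push_cast; ring
  map_smul' c u := by
    funext j
    simp only [Pi.smul_apply, smul_eq_mul, RingHom.id_apply, Complex.real_smul]
    push_cast; ring
  left_inv u := by funext j; cases j <;> simp
  right_inv v := by
    funext j
    simp only []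
    apply Complex.ext <;> simp

lemma phi_mulVec {m d : ℕ} (A : Matrix (Fin m) (Fin d) ℂ) (x : Fin d → ℂ)
    (u : (Fin d ⊕ Fin d) ⊕ Fin m → ℝ) :
    phi m ((discD A x).mulVec u) =
      A.mulVec (fun k => (u (Sum.inl (Sum.inl k)) : ℂ) - (u (Sum.inl (Sum.inr k)) : ℂ) * Complex.I)
        + fun j => (u (Sum.inr j) : ℂ) * A.mulVec x j := by
  funext j
  have h1 : (discD A x).mulVec u (Sum.inl j)
      = (∑ k, (A j k).re * u (Sum.inl (Sum.inl k)))
        + (∑ k, (A j k).im * u (Sum.inl (Sum.inr k)))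
        + (A.mulVec x j).re * u (Sum.inr j) := by
    simp [discD, Matrix.mulVec, dotProduct, Fintype.sum_sum_type, Matrix.diagonal_apply,
      ite_mul, Finset.sum_ite_eq, Finset.sum_add_distrib]
  have h2 : (discD A x).mulVec u (Sum.inr j)
      = -(∑ k, (A j k).im * u (Sum.inl (Sum.inl k)))
        + (∑ k, (A j k).re * u (Sum.inl (Sum.inr k)))
        - (A.mulVec x j).im * u (Sum.inr j) := by
    simp [discD, Matrix.mulVec, dotProduct, Fintype.sum_sum_type, Matrix.diagonal_apply,
      ite_mul, Finset.sum_ite_eq, Finset.sum_add_distrib, Finset.sum_neg_distrib]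
    ring
  show ((discD A x).mulVec u (Sum.inl j) : ℂ) - ((discD A x).mulVec u (Sum.inr j) : ℂ) * Complex.I
      = _
  rw [h1, h2]
  apply Complex.ext <;>
    simp [Matrix.mulVec, dotProduct, Complex.re_sum, Complex.im_sum, Complex.mul_re,
      Complex.mul_im, Finset.sum_add_distrib, Finset.sum_sub_distrib, sub_mul, mul_comm] <;>
    ring_nf

lemma map_range {m d : ℕ} (A : Matrix (Fin m) (Fin d) ℂ) (x : Fin d → ℂ) :
    Submodule.map (phi m).toLinearMap (LinearMap.range (discD A x).mulVecLin)
      = (LinearMap.range A.mulVecLin).restrictScalars ℝ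
        ⊔ Submodule.span ℝ (Set.range fun j : Fin m => Pi.single j (A.mulVec x j)) := by
  apply le_antisymm
  · rintro _ ⟨_, ⟨u, rfl⟩, rfl⟩
    rw [Matrix.mulVecLin_apply, LinearEquiv.coe_coe, phi_mulVec]
    refine add_mem (Submodule.mem_sup_left ⟨_, rfl⟩) (Submodule.mem_sup_right ?_)
    rw [show (fun j => (u (Sum.inr j) : ℂ) * A.mulVec x j)
        = ∑ j, (u (Sum.inr j)) • (Pi.single j (A.mulVec x j) : Fin m → ℂ) from ?_]
    · exact Submodule.sum_mem _ fun j _ =>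
        Submodule.smul_mem _ _ (Submodule.subset_span ⟨j, rfl⟩)
    · funext j'
      simp [Finset.sum_apply, Pi.single_apply, smul_ite, Complex.real_smul]
  · rw [sup_le_iff]
    constructor
    · rintro v hv
      obtain ⟨z, rfl⟩ : ∃ z, A.mulVec z = v := hv
      refine Submodule.mem_map.mpr
        ⟨(discD A x).mulVec (Sum.elim (Sum.elim (fun k => (z k).re) (fun k => -(z k).im)) 0),
          ⟨_, rfl⟩, ?_⟩
      rw [LinearEquiv.coe_coe, phi_mulVec]
      have : (fun k => ((z k).re : ℂ) - ((-(z k).im : ℝ) : ℂ) * Complex.I) = z := by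
        funext k
        apply Complex.ext <;> simp
      simp only [Sum.elim_inl, Sum.elim_inr, Pi.zero_apply, Complex.ofReal_zero, zero_mul]
      rw [this]
      funext j; simp
    · rw [Submodule.span_le]
      rintro _ ⟨j, rfl⟩
      refine Submodule.mem_map.mpr
        ⟨(discD A x).mulVec (Sum.elim 0 (Pi.single j 1)), ⟨_, rfl⟩, ?_⟩
      rw [LinearEquiv.coe_coe, phi_mulVec]
      funext j'
      simp only [Sum.elim_inl, Sum.elim_inr, Pi.zero_apply, Complex.ofReal_zero, zero_mul,
        sub_zero, Pi.add_apply]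
      rw [show A.mulVec (fun _ => (0:ℂ)) = 0 from by
        funext i; simp [Matrix.mulVec, dotProduct]]
      simp only [Pi.zero_apply, zero_add]
      rw [Pi.single_apply, Pi.single_apply]
      split <;> simp_all

lemma finrank_V {m : ℕ} (w : Fin m → ℂ) :
    finrank ℝ (Submodule.span ℝ (Set.range fun j : Fin m => Pi.single j (w j)))
      = Fintype.card {j : Fin m // w j ≠ 0} := by
  classical
  set b : {j : Fin m // w j ≠ 0} → (Fin m → ℂ) := fun j => Pi.single j.1 (w j.1) with hb
  have hind : LinearIndependent ℝ b := by
    rw [Fintype.linearIndependent_iff]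
    intro g hg j
    have h1 := congrFun hg j.1
    rw [Finset.sum_apply] at h1
    rw [Finset.sum_eq_single j] at h1
    · simp only [hb, Pi.smul_apply, Pi.single_eq_same, Pi.zero_apply] at h1
      rw [Complex.real_smul, mul_eq_zero] at h1
      rcases h1 with h1 | h1
      · exact_mod_cast h1
      · exact absurd h1 j.2
    · intro j' _ hne
      have hne' : j.1 ≠ j'.1 := fun h => hne (Subtype.ext h.symm)
      simp [hb, Pi.single_apply, hne']
    · intro h; exact absurd (Finset.mem_univ j) h
  have hspan : Submodule.span ℝ (Set.range fun j : Fin m => Pi.single j (w j))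
      = Submodule.span ℝ (Set.range b) := by
    apply le_antisymm
    · rw [Submodule.span_le]
      rintro _ ⟨j, rfl⟩
      by_cases h : w j = 0
      · simp only [h, Pi.single_zero]
        exact Submodule.zero_mem _
      · exact Submodule.subset_span ⟨⟨j, h⟩, rfl⟩
    · rw [Submodule.span_le]
      rintro _ ⟨j, rfl⟩
      exact Submodule.subset_span ⟨j.1, rfl⟩
  rw [hspan, finrank_span_eq_card hind]

lemma finrank_U {m d : ℕ} (A : Matrix (Fin m) (Fin d) ℂ) (hA : A.rank = d) :
    finrank ℝ ((LinearMap.range A.mulVecLin).restrictScalars ℝ) = 2 * d := by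
  have h1 : finrank ℝ ((LinearMap.range A.mulVecLin).restrictScalars ℝ)
      = finrank ℝ (LinearMap.range A.mulVecLin) :=
    ((Submodule.restrictScalarsEquiv ℝ ℂ _ (LinearMap.range A.mulVecLin)).restrictScalars ℝ).finrank_eq
  rw [h1, ← Module.finrank_mul_finrank ℝ ℂ (LinearMap.range A.mulVecLin),
    Complex.finrank_real_complex]
  rw [Matrix.rank] at hA
  rw [hA]

theorem stmt_6 (m d : ℕ) (A : Matrix (Fin m) (Fin d) ℂ) (hA : A.rank = d)
    (x : Fin d → ℂ) (hx : x ≠ 0) :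
    x ∈ Wset A ↔
      (discD A x).rank = 2 * d + Fintype.card {j : Fin m // A.mulVec x j ≠ 0} - 1 := by
  classical
  set U : Submodule ℝ (Fin m → ℂ) := (LinearMap.range A.mulVecLin).restrictScalars ℝ with hUdef
  set V : Submodule ℝ (Fin m → ℂ) :=
    Submodule.span ℝ (Set.range fun j : Fin m => Pi.single j (A.mulVec x j)) with hVdef
  have hAx0 : A.mulVec x ≠ 0 := by
    intro h0
    apply hx
    apply injA A hA
    show A.mulVec x = A.mulVec 0
    rw [h0, Matrix.mulVec_zero]
  have hAxU : A.mulVec x ∈ U := ⟨x, rfl⟩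
  have hAxV : A.mulVec x ∈ V := by
    rw [hVdef, mem_V_iff]
    exact ⟨fun _ => 1, by funext j; simp⟩
  have hspanle : Submodule.span ℝ {A.mulVec x} ≤ U ⊓ V :=
    (Submodule.span_singleton_le_iff_mem _ _).mpr (Submodule.mem_inf.mpr ⟨hAxU, hAxV⟩)
  have hfr1 : finrank ℝ (Submodule.span ℝ ({A.mulVec x} : Set (Fin m → ℂ))) = 1 :=
    finrank_span_singleton hAx0
  have hk1 : 1 ≤ finrank ℝ ↥(U ⊓ V) := by
    rw [← hfr1]
    exact Submodule.finrank_mono hspanle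
  have hkey : x ∈ Wset A ↔ finrank ℝ ↥(U ⊓ V) = 1 := by
    rw [wset_iff A hA x hx]
    constructor
    · intro h
      have heq : U ⊓ V = Submodule.span ℝ {A.mulVec x} := le_antisymm h hspanle
      rw [heq, hfr1]
    · intro h
      have heq : Submodule.span ℝ {A.mulVec x} = U ⊓ V :=
        Submodule.eq_of_le_of_finrank_le hspanle (by rw [h, hfr1])
      exact le_of_eq heq.symm
  have hrank : (discD A x).rank = finrank ℝ ↥(U ⊔ V) := by
    rw [Matrix.rank,
      ← LinearEquiv.finrank_map_eq (phi m) (LinearMap.range (discD A x).mulVecLin), map_range]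
  have hsum := Submodule.finrank_sup_add_finrank_inf_eq U V
  have hU2 : finrank ℝ U = 2 * d := finrank_U A hA
  have hV2 : finrank ℝ V = Fintype.card {j : Fin m // A.mulVec x j ≠ 0} := finrank_V _
  rw [hU2, hV2] at hsum
  rw [hkey, hrank]
  omega
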